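/- Let d ≥ 1 and T ≥ 1 be integers, and let a : ℕ → ℝ satisfy the blocking constraint. Then ∑_{t=1}^{T} min(t, d) · a(t) ≤ T; in particular d · ∑_{t=1}^{T} a(t) ≤ T + ∑_{t=1}^{d−1} (d − t) · a(t) ≤ T + d − 1. -/

import Mathlib

open Finset

/-- Double counting: weighted sum with weights given by interval cards swaps. -/
lemma swap_min_sum (d T : ℕ) (hd : 1 ≤ d) (a : ℕ → ℝ) :
    ∑ t ∈ Icc 1 T, ((min t d : ℕ) : ℝ) * a t
      = ∑ s ∈ Icc 1 T, ∑ t ∈ Icc s (min T (s + d - 1)), a t := by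
  have h1 : ∀ t ∈ Icc 1 T, ((min t d : ℕ) : ℝ) * a t
      = ∑ s ∈ Icc (max 1 (t + 1 - d)) t, a t := by
    intro t ht
    rw [Finset.sum_const, Nat.card_Icc, nsmul_eq_mul]
    have := mem_Icc.mp ht
    congr 2
    omega
  rw [Finset.sum_congr rfl h1]
  refine Finset.sum_comm' ?_
  intro t s
  simp only [mem_Icc]
  omega

lemma swap_tail_sum (d : ℕ) (hd : 1 ≤ d) (a : ℕ → ℝ) :
    ∑ t ∈ Icc 1 (d - 1), ((d : ℝ) - (t : ℝ)) * a t
      = ∑ s ∈ Icc 1 (d - 1), ∑ t ∈ Icc 1 s, a t := by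
  have h1 : ∀ t ∈ Icc 1 (d - 1), ((d : ℝ) - (t : ℝ)) * a t
      = ∑ s ∈ Icc t (d - 1), a t := by
    intro t ht
    rw [Finset.sum_const, Nat.card_Icc, nsmul_eq_mul]
    have ht' := mem_Icc.mp ht
    have : ((d - 1 + 1 - t : ℕ) : ℝ) = (d : ℝ) - (t : ℝ) := by
      have : (d - 1 + 1 - t : ℕ) = d - t := by omega
      rw [this, Nat.cast_sub (by omega)]
    rw [this]
  rw [Finset.sum_congr rfl h1]
  refine Finset.sum_comm' ?_
  intro t s
  simp only [mem_Icc]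
  omega

/-- For an arm with blocking delay `d`, plays `a t ∈ {0,1}` satisfying the blocking
constraint obey `∑_{t=1}^{T} min(t,d)·a(t) ≤ T`; in particular
`d·∑_{t=1}^{T} a(t) ≤ T + ∑_{t=1}^{d-1} (d-t)·a(t) ≤ T + d - 1`. -/
theorem blocking_weighted_plays_bound (d T : ℕ) (hd : 1 ≤ d) (hT : 1 ≤ T)
    (a : ℕ → ℝ)
    (hval : ∀ t, 1 ≤ t → a t = 0 ∨ a t = 1)
    (hblock : ∀ t, 1 ≤ t → ∑ t' ∈ Finset.Icc t (t + d - 1), a t' ≤ 1) :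
    (∑ t ∈ Finset.Icc 1 T, ((min t d : ℕ) : ℝ) * a t ≤ (T : ℝ)) ∧
    ((d : ℝ) * ∑ t ∈ Finset.Icc 1 T, a t
        ≤ (T : ℝ) + ∑ t ∈ Finset.Icc 1 (d - 1), ((d : ℝ) - (t : ℝ)) * a t) ∧
    ((T : ℝ) + ∑ t ∈ Finset.Icc 1 (d - 1), ((d : ℝ) - (t : ℝ)) * a t
        ≤ (T : ℝ) + (d : ℝ) - 1) := by
  have ha0 : ∀ t, 1 ≤ t → 0 ≤ a t := by
    intro t ht; rcases hval t ht with h | h <;> simp [h]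
  -- Part 1
  have h1 : ∑ t ∈ Icc 1 T, ((min t d : ℕ) : ℝ) * a t ≤ (T : ℝ) := by
    rw [swap_min_sum d T hd a]
    calc ∑ s ∈ Icc 1 T, ∑ t ∈ Icc s (min T (s + d - 1)), a t
        ≤ ∑ s ∈ Icc 1 T, ∑ t ∈ Icc s (s + d - 1), a t := by
          refine Finset.sum_le_sum fun s hs => ?_
          refine Finset.sum_le_sum_of_subset_of_nonneg ?_ ?_
          · exact Finset.Icc_subset_Icc le_rfl (min_le_right _ _)
          · intro t ht _
            exact ha0 t (le_trans (mem_Icc.mp hs).1 (mem_Icc.mp ht).1)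
      _ ≤ ∑ s ∈ Icc 1 T, (1 : ℝ) := by
          refine Finset.sum_le_sum fun s hs => hblock s (mem_Icc.mp hs).1
      _ = (T : ℝ) := by
          rw [Finset.sum_const, Nat.card_Icc, nsmul_eq_mul, mul_one]
          norm_num
  refine ⟨h1, ?_, ?_⟩
  · -- Part 2
    have key : (d : ℝ) * ∑ t ∈ Icc 1 T, a t
        = (∑ t ∈ Icc 1 T, ((min t d : ℕ) : ℝ) * a t)
          + ∑ t ∈ Icc 1 T, ((d : ℝ) - ((min t d : ℕ) : ℝ)) * a t := by
      rw [Finset.mul_sum, ← Finset.sum_add_distrib]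
      refine Finset.sum_congr rfl fun t ht => ?_
      ring
    rw [key]
    have htail : ∑ t ∈ Icc 1 T, ((d : ℝ) - ((min t d : ℕ) : ℝ)) * a t
        ≤ ∑ t ∈ Icc 1 (d - 1), ((d : ℝ) - (t : ℝ)) * a t := by
      have hzero : ∑ t ∈ Icc 1 T, ((d : ℝ) - ((min t d : ℕ) : ℝ)) * a t
          = ∑ t ∈ (Icc 1 T).filter (· ≤ d - 1), ((d : ℝ) - ((min t d : ℕ) : ℝ)) * a t := by
        rw [eq_comm]
        refine Finset.sum_subset (Finset.filter_subset _ _) ?_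
        intro t ht hnt
        have : min t d = d := by
          simp only [mem_filter, mem_Icc] at ht hnt
          omega
        rw [this]; ring
      rw [hzero]
      have heq : ∀ t ∈ (Icc 1 T).filter (· ≤ d - 1),
          ((d : ℝ) - ((min t d : ℕ) : ℝ)) * a t = ((d : ℝ) - (t : ℝ)) * a t := by
        intro t ht
        simp only [mem_filter, mem_Icc] at ht
        have : min t d = t := by omega
        rw [this]
      rw [Finset.sum_congr rfl heq]
      refine Finset.sum_le_sum_of_subset_of_nonneg ?_ ?_
      · intro t ht
        simp only [mem_filter, mem_Icc] at ht ⊢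
        omega
      · intro t ht _
        have ht' := mem_Icc.mp ht
        have h1t : (t : ℝ) ≤ (d : ℝ) := by
          have : t ≤ d := by omega
          exact_mod_cast this
        exact mul_nonneg (by linarith) (ha0 t ht'.1)
    linarith
  · -- Part 3
    have key : ∑ t ∈ Icc 1 (d - 1), ((d : ℝ) - (t : ℝ)) * a t ≤ (d : ℝ) - 1 := by
      rw [swap_tail_sum d hd a]
      calc ∑ s ∈ Icc 1 (d - 1), ∑ t ∈ Icc 1 s, a t
          ≤ ∑ s ∈ Icc 1 (d - 1), (1 : ℝ) := by
            refine Finset.sum_le_sum fun s hs => ?_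
            have hs' := mem_Icc.mp hs
            calc ∑ t ∈ Icc 1 s, a t ≤ ∑ t ∈ Icc 1 (1 + d - 1), a t := by
                  refine Finset.sum_le_sum_of_subset_of_nonneg ?_ ?_
                  · exact Finset.Icc_subset_Icc le_rfl (by omega)
                  · intro t ht _; exact ha0 t (mem_Icc.mp ht).1
              _ ≤ 1 := hblock 1 le_rfl
        _ = (d : ℝ) - 1 := by
            rw [Finset.sum_const, Nat.card_Icc, nsmul_eq_mul, mul_one]
            have : (d - 1 + 1 - 1 : ℕ) = d - 1 := by omega
            rw [this, Nat.cast_sub hd, Nat.cast_one]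
    linarith
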